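/- Let Π be an orthogonal projector and X, Y operators on a finite-dimensional complex Hilbert space such that ‖X‖_∞ ≤ 1, ‖Y‖_∞ ≤ 1, ΠX = XΠ = Π, ‖(I−Π)X(I−Π)‖_∞ ≤ 1 − ε_C, and ‖ΠYΠ‖_∞ ≤ 1 − ε_A, where 0 < ε_C < 1 and 0 < ε_A < 1. Then for any 0 < p < 1, ‖pX + (1−p)Y‖_∞ ≤ 1 − (ε_A/12)·min(p ε_C, 1−p) < 1. -/

import Mathlib

set_option linter.unusedSectionVars false
set_option maxHeartbeats 800000


/-- ε̄β² + (k1-ε̄β)²/2 ≥ k1²/4 for ε̄ = 2-εC ∈ [1,2] -/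
lemma certK (εC β k1 : ℝ) (hC0 : 0 < εC) (hC1 : εC < 1) :
    k1^2/4 ≤ (2-εC)*β^2 + (k1-(2-εC)*β)^2/2 := by
  nlinarith [sq_nonneg ((4-εC)*β - k1), mul_nonneg (mul_nonneg hC0.le hC0.le) (sq_nonneg β),
    mul_nonneg hC0.le (sq_nonneg ((4-εC)*β - k1)), mul_nonneg hC0.le (sq_nonneg k1),
    mul_nonneg hC0.le (sq_nonneg (k1 - (2-εC)*β))]

/-- ε̄β² + (c-β)² ≥ c²/2 -/
lemma certC (εC β c : ℝ) (hC1 : εC < 1) :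
    c^2/2 ≤ (2-εC)*β^2 + (c-β)^2 := by
  nlinarith [sq_nonneg (2*β - c), mul_nonneg (sub_nonneg.2 hC1.le) (sq_nonneg β)]



lemma certPos (α β εA : ℝ) (hA1 : εA < 1) (hαβ : α^2 + β^2 = 1) (hα0 : 0 ≤ α)
    (hβ0 : 0 ≤ β) (hB : β^2 < εA/6) : 0 ≤ α - 2*β := by
  have hα2 : 5/6 ≤ α^2 := by nlinarith
  have hαpos : 0 < α := by nlinarith
  nlinarith [mul_pos (show (0:ℝ) < 2*β + α by linarith) (show (0:ℝ) < 2*β + α by linarith)]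

lemma certSB (α β εA : ℝ) (hA34 : 3/4 < εA) (hA1 : εA < 1) (hαβ : α^2 + β^2 = 1)
    (hα0 : 0 ≤ α) (hβ0 : 0 ≤ β) (hB : β^2 < εA/6) : β ≤ εA*α := by
  have hα2 : 5/6 ≤ α^2 := by nlinarith
  have h916 : 9/16 ≤ εA^2 := by nlinarith
  have h1532 : 15/32 ≤ εA^2*α^2 := by nlinarith
  nlinarith [mul_nonneg (show (0:ℝ) ≤ εA by linarith) hα0]

lemma certS (εA α β c k1 : ℝ) (hA0 : 0 < εA) (hA1 : εA < 1) (hα0 : 0 ≤ α)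
    (hαβ : α^2 + β^2 = 1) (hβ0 : 0 ≤ β) (hB : β^2 < εA/6) (hk : k1^2 < 2*εA/3)
    (hc2 : α^2 * (εA*(2-εA)) - k1^2 ≤ c^2) : εA/3 ≤ c^2 + (εA*α-β)^2 := by
  have hα2β : 0 ≤ α - 2*β := certPos α β εA hA1 hαβ hα0 hβ0 hB
  rcases le_or_gt (2*β^2) ((α-β)^2) with h | h
  · nlinarith [mul_nonneg hA0.le (by linarith : (0:ℝ) ≤ (α-β)^2 - 2*β^2)]
  · nlinarith [mul_nonneg hα0 hα2β,
      mul_nonneg (by linarith : (0:ℝ) ≤ 1 - εA) (by linarith : (0:ℝ) ≤ 2*β^2 - (α-β)^2)]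

lemma scalar_main (p εA εC β α c k1 g1 g2 g3 : ℝ)
    (hp0 : 0 < p) (hp1 : p < 1) (hA0 : 0 < εA) (hA1 : εA < 1)
    (hC0 : 0 < εC) (hC1 : εC < 1)
    (hβ0 : 0 ≤ β) (hα0 : 0 ≤ α) (hαβ : α^2 + β^2 = 1)
    (hc0 : 0 ≤ c) (hk0 : 0 ≤ k1)
    (hc2 : α^2 * (εA*(2-εA)) - k1^2 ≤ c^2)
    (hg1 : εC*(2-εC)*β^2 ≤ g1)
    (hg30 : 0 ≤ g3) (hg3 : β ≤ c → (c - β)^2 ≤ g3)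
    (hg20 : 0 ≤ g2)
    (hg2k : (2-εC)*β ≤ k1 → (k1-(2-εC)*β)^2 ≤ g2)
    (hg2s : β ≤ εA*α → (εA*α-β)^2 ≤ g2) :
    εA * min (p*εC) (1-p) / 6 ≤ p*g1 + (1-p)*g3 + p*(1-p)*g2 := by
  set t := min (p*εC) (1-p) with htdef
  have hq0 : 0 < 1 - p := by linarith
  have ht1 : t ≤ p*εC := min_le_left _ _
  have ht2 : t ≤ 1-p := min_le_right _ _
  have ht0 : 0 < t := lt_min (mul_pos hp0 hC0) hq0
  have hpq : t/2 ≤ p*(1-p) := by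
    rcases le_total p (1-p) with h | h
    · nlinarith
    · nlinarith
  have h2C : (0:ℝ) ≤ (2-εC)*β^2 := mul_nonneg (by linarith) (sq_nonneg β)
  have hT1 : t * ((2-εC)*β^2) ≤ p*g1 := by
    calc t * ((2-εC)*β^2) ≤ (p*εC) * ((2-εC)*β^2) := mul_le_mul_of_nonneg_right ht1 h2C
    _ = p * (εC*(2-εC)*β^2) := by ring
    _ ≤ p*g1 := mul_le_mul_of_nonneg_left hg1 hp0.le
  have hT3 : t*g3 ≤ (1-p)*g3 := mul_le_mul_of_nonneg_right ht2 hg30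
  have hT30 : 0 ≤ (1-p)*g3 := mul_nonneg hq0.le hg30
  have hT20 : 0 ≤ p*(1-p)*g2 := mul_nonneg (mul_nonneg hp0.le hq0.le) hg20
  rcases le_or_gt (εA/6) (β^2) with hcA | hB
  · -- case A : big β
    have hstep : εA/6 ≤ (2-εC)*β^2 := by nlinarith [mul_nonneg (sq_nonneg β) hC0.le]
    have h3 : t*(εA/6) ≤ t*((2-εC)*β^2) := mul_le_mul_of_nonneg_left hstep ht0.le
    calc εA * t / 6 = t*(εA/6) := by ring
    _ ≤ t*((2-εC)*β^2) := h3
    _ ≤ p*g1 := hT1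
    _ ≤ p*g1 + (1-p)*g3 + p*(1-p)*g2 := by linarith
  · -- case B : small β
    have hα2 : 5/6 ≤ α^2 := by nlinarith
    rcases le_or_gt (2*εA/3) (k1^2) with hk | hk
    · -- B-I : big k1
      have hkβ : (2-εC)*β ≤ k1 := by nlinarith [mul_nonneg (mul_nonneg hβ0 hβ0) hC0.le]
      have hg2' := hg2k hkβ
      have h5 : t/2 * (k1-(2-εC)*β)^2 ≤ p*(1-p)*g2 :=
        mul_le_mul hpq hg2' (sq_nonneg _) (mul_nonneg hp0.le hq0.le)
      have hcert := certK εC β k1 hC0 hC1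
      have h6 : t*(k1^2/4) ≤ t*((2-εC)*β^2 + (k1-(2-εC)*β)^2/2) :=
        mul_le_mul_of_nonneg_left hcert ht0.le
      have hstep : εA/6 ≤ k1^2/4 := by linarith
      have h7 : t*(εA/6) ≤ t*(k1^2/4) := mul_le_mul_of_nonneg_left hstep ht0.le
      calc εA * t / 6 = t*(εA/6) := by ring
      _ ≤ t*(k1^2/4) := h7
      _ ≤ t*((2-εC)*β^2 + (k1-(2-εC)*β)^2/2) := h6
      _ = t*((2-εC)*β^2) + t/2*(k1-(2-εC)*β)^2 := by ring
      _ ≤ p*g1 + p*(1-p)*g2 := by linarith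
      _ ≤ p*g1 + (1-p)*g3 + p*(1-p)*g2 := by linarith
    · -- c branch
      have hg3c : c^2/2 ≤ (2-εC)*β^2 + g3 := by
        rcases le_or_gt β c with h | h
        · have h1 := hg3 h
          have h2 := certC εC β c hC1
          linarith
        · nlinarith
      have hsum : t*(c^2/2) ≤ p*g1 + (1-p)*g3 := by
        calc t*(c^2/2) ≤ t*((2-εC)*β^2 + g3) := mul_le_mul_of_nonneg_left hg3c ht0.le
        _ = t*((2-εC)*β^2) + t*g3 := by ring
        _ ≤ p*g1 + (1-p)*g3 := by linarith
      rcases le_or_gt εA (3/4) with hA34 | hA34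
      · -- B-II
        have hc3 : εA/3 ≤ c^2 := by
          nlinarith [mul_nonneg (by linarith : (0:ℝ) ≤ α^2 - 5/6)
              (mul_nonneg hA0.le (by linarith : (0:ℝ) ≤ 2 - εA)),
            mul_nonneg hA0.le (by linarith : (0:ℝ) ≤ 3/4 - εA)]
        have hstep : εA/6 ≤ c^2/2 := by linarith
        have h7 : t*(εA/6) ≤ t*(c^2/2) := mul_le_mul_of_nonneg_left hstep ht0.le
        calc εA * t / 6 = t*(εA/6) := by ring
        _ ≤ t*(c^2/2) := h7
        _ ≤ p*g1 + (1-p)*g3 := hsum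
        _ ≤ p*g1 + (1-p)*g3 + p*(1-p)*g2 := by linarith
      · -- B-III
        have hsβ : β ≤ εA*α := certSB α β εA hA34 hA1 hαβ hα0 hβ0 hB
        have hg2' := hg2s hsβ
        have h5 : t/2 * (εA*α-β)^2 ≤ p*(1-p)*g2 :=
          mul_le_mul hpq hg2' (sq_nonneg _) (mul_nonneg hp0.le hq0.le)
        have hkey : εA/3 ≤ c^2 + (εA*α-β)^2 := certS εA α β c k1 hA0 hA1 hα0 hαβ hβ0 hB hk hc2
        have hstep : εA/6 ≤ c^2/2 + (εA*α-β)^2/2 := by linarith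
        have h7 : t*(εA/6) ≤ t*(c^2/2) + t/2*(εA*α-β)^2 := by
          have := mul_le_mul_of_nonneg_left hstep ht0.le
          linarith [this]
        calc εA * t / 6 = t*(εA/6) := by ring
        _ ≤ t*(c^2/2) + t/2*(εA*α-β)^2 := h7
        _ ≤ p*g1 + (1-p)*g3 + p*(1-p)*g2 := by linarith


lemma le_of_sq_le' (a c : ℝ) (h : a^2 ≤ c^2) (hc : 0 ≤ c) : a ≤ c := by
  nlinarith [sq_nonneg (a - c), sq_nonneg (a + c)]

lemma lam_cs (r A B : ℝ) (hA : 0 ≤ A) (hB : 0 ≤ B)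
    (h : ∀ l : ℝ, 2 * l * r ≤ A + l^2 * B) : r ≤ Real.sqrt A * Real.sqrt B := by
  rcases le_or_gt r 0 with hr | hr
  · exact hr.trans (by positivity)
  rcases eq_or_lt_of_le hB with hB0 | hB0
  · exfalso
    have h2 := h ((A + 1) / (2 * r))
    rw [← hB0] at h2
    have e : 2 * ((A + 1) / (2 * r)) * r = A + 1 := by
      field_simp
    rw [e] at h2
    simp at h2
    linarith
  · have h2 := h (r / B)
    have hr2 : r^2 ≤ A * B := by
      have hB' : B ≠ 0 := ne_of_gt hB0
      have e : 2 * (r / B) * r = 2 * r^2 / B := by ring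
      have e2 : (r / B)^2 * B = r^2 / B := by field_simp
      rw [e, e2] at h2
      have e3 : 2 * r^2 / B = 2 * (r^2/B) := by ring
      rw [e3] at h2
      have h3 : r^2 / B ≤ A := by linarith
      have := (div_le_iff₀ hB0).1 h3
      nlinarith
    calc r = Real.sqrt (r^2) := by rw [Real.sqrt_sq hr.le]
    _ ≤ Real.sqrt (A*B) := Real.sqrt_le_sqrt hr2
    _ = Real.sqrt A * Real.sqrt B := Real.sqrt_mul hA B

section vec
variable {H : Type*} [NormedAddCommGroup H] [InnerProductSpace ℂ H] [FiniteDimensional ℂ H]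

noncomputable local instance : InnerProductSpace ℝ H := InnerProductSpace.rclikeToReal ℂ H

lemma rz (x y : H) (h : (inner ℂ x y : ℂ) = 0) : (inner ℝ x y : ℝ) = 0 := by
  have : (inner ℝ x y : ℝ) = Complex.re (inner ℂ x y : ℂ) := rfl
  rw [this, h]; simp

lemma norm_sq_orth (x y : H) (h : (inner ℂ x y : ℂ) = 0) : ‖x + y‖^2 = ‖x‖^2 + ‖y‖^2 := by
  rw [norm_add_sq_real, rz x y h]; ring

lemma padj (P : H →L[ℂ] H) (hPsa : IsSelfAdjoint P) (x y : H) :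
    (inner ℂ (P x) y : ℂ) = inner ℂ x (P y) := by
  rw [← ContinuousLinearMap.adjoint_inner_left, hPsa.adjoint_eq]

lemma proj_pyth (P : H →L[ℂ] H) (hPproj : P ∘L P = P) (hPsa : IsSelfAdjoint P) (z : H) :
    ‖P z‖^2 + ‖z - P z‖^2 = ‖z‖^2 := by
  have hPP : P (P z) = P z := by
    have : (P ∘L P) z = P z := by rw [hPproj]
    simpa using this
  have h0 : (inner ℂ (P z) (z - P z) : ℂ) = 0 := by
    rw [padj P hPsa, map_sub, hPP, sub_self, inner_zero_right]
  have : ‖P z + (z - P z)‖^2 = ‖P z‖^2 + ‖z - P z‖^2 := norm_sq_orth _ _ h0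
  simpa using this.symm

lemma proj_le (P : H →L[ℂ] H) (hPproj : P ∘L P = P) (hPsa : IsSelfAdjoint P) (z : H) :
    ‖P z‖ ≤ ‖z‖ ∧ ‖z - P z‖ ≤ ‖z‖ := by
  have h := proj_pyth P hPproj hPsa z
  constructor
  · exact le_of_sq_le' _ _ (by nlinarith [sq_nonneg ‖z - P z‖]) (norm_nonneg z)
  · exact le_of_sq_le' _ _ (by nlinarith [sq_nonneg ‖P z‖]) (norm_nonneg z)

lemma key_pointwise (P X Y : H →L[ℂ] H)
    (hPproj : P ∘L P = P) (hPsa : IsSelfAdjoint P)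
    (hX : ‖X‖ ≤ 1) (hY : ‖Y‖ ≤ 1)
    (hPX : P ∘L X = P) (hXP : X ∘L P = P)
    (εC εA : ℝ) (hεC0 : 0 < εC) (hεC1 : εC < 1) (hεA0 : 0 < εA) (hεA1 : εA < 1)
    (hXgap : ‖(1 - P) ∘L X ∘L (1 - P)‖ ≤ 1 - εC)
    (hYgap : ‖P ∘L Y ∘L P‖ ≤ 1 - εA)
    (p : ℝ) (hp0 : 0 < p) (hp1 : p < 1) (v : H) (hv : ‖v‖ = 1) :
    ‖(p • X + (1 - p) • Y) v‖^2 ≤ 1 - εA * min (p*εC) (1-p) / 6 := by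
  set a := P v with ha
  set b := v - P v with hb
  have hvab : v = a + b := by rw [ha, hb]; abel
  have hPa : P a = a := by
    have : (P ∘L P) v = P v := by rw [hPproj]
    simpa using this
  have hPb : P b = 0 := by rw [hb, map_sub, hPa, sub_self]
  set α := ‖a‖ with hα
  set β := ‖b‖ with hβ
  have hab0 : (inner ℂ a b : ℂ) = 0 := by
    rw [ha, padj P hPsa, hb, map_sub, hPa]
    simp [hPa, ← ha]
  have hαβ : α^2 + β^2 = 1 := by
    have := norm_sq_orth a b hab0
    rw [← hvab, hv] at this
    simpa using this.symm
  -- X side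
  have hXa : X a = a := by
    have : (X ∘L P) v = P v := by rw [hXP]
    simpa using this
  have hXv : X v = a + X b := by rw [hvab, map_add, hXa]
  have hPXb : P (X b) = 0 := by
    have : (P ∘L X) b = P b := by rw [hPX]
    simpa [hPb] using this
  have hXb_le : ‖X b‖ ≤ (1-εC)*β := by
    have h1 : ((1 - P) ∘L X ∘L (1 - P)) b = X b := by
      simp only [ContinuousLinearMap.comp_apply, ContinuousLinearMap.sub_apply,
        ContinuousLinearMap.one_apply, hPb, sub_zero, hPXb]
    calc ‖X b‖ = ‖((1 - P) ∘L X ∘L (1 - P)) b‖ := by rw [h1]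
    _ ≤ ‖(1 - P) ∘L X ∘L (1 - P)‖ * β := ((1 - P) ∘L X ∘L (1 - P)).le_opNorm b
    _ ≤ (1-εC)*β := mul_le_mul_of_nonneg_right hXgap (norm_nonneg b)
  have haXb : (inner ℂ a (X b) : ℂ) = 0 := by
    rw [ha, padj P hPsa, hPXb, inner_zero_right]
  have hXv2 : ‖X v‖^2 = α^2 + ‖X b‖^2 := by
    rw [hXv]; exact norm_sq_orth a (X b) haXb
  -- Y side
  set ya := Y a with hya
  set yb := Y b with hyb
  have hYv : Y v = ya + yb := by rw [hvab, map_add]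
  have hya_le : ‖ya‖ ≤ α := by
    calc ‖Y a‖ ≤ ‖Y‖ * ‖a‖ := Y.le_opNorm a
    _ ≤ 1 * α := mul_le_mul_of_nonneg_right hY (norm_nonneg a)
    _ = α := one_mul α
  have hyb_le : ‖yb‖ ≤ β := by
    calc ‖Y b‖ ≤ ‖Y‖ * ‖b‖ := Y.le_opNorm b
    _ ≤ 1 * β := mul_le_mul_of_nonneg_right hY (norm_nonneg b)
    _ = β := one_mul β
  set n1v := P ya with hn1v
  set k1v := ya - P ya with hk1v
  set k1 := ‖k1v‖ with hk1
  have hya_pyth : ‖n1v‖^2 + k1^2 = ‖ya‖^2 := proj_pyth P hPproj hPsa ya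
  have hn1_le : ‖n1v‖ ≤ (1-εA)*α := by
    have h1 : (P ∘L Y ∘L P) a = n1v := by
      simp only [ContinuousLinearMap.comp_apply, hPa, hn1v, hya]
    calc ‖n1v‖ = ‖(P ∘L Y ∘L P) a‖ := by rw [h1]
    _ ≤ ‖P ∘L Y ∘L P‖ * α := (P ∘L Y ∘L P).le_opNorm a
    _ ≤ (1-εA)*α := mul_le_mul_of_nonneg_right hYgap (norm_nonneg a)
  -- Gram inequality
  have hA0' : 0 ≤ α^2 - ‖ya‖^2 := by
    have := pow_le_pow_left₀ (norm_nonneg ya) hya_le 2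
    linarith
  have hB0' : 0 ≤ β^2 - ‖yb‖^2 := by
    have := pow_le_pow_left₀ (norm_nonneg yb) hyb_le 2
    linarith
  have hlam : ∀ l : ℝ, 2*l*(inner ℝ ya yb : ℝ) ≤ (α^2 - ‖ya‖^2) + l^2*(β^2 - ‖yb‖^2) := by
    intro l
    have h1 : ‖Y (a + l • b)‖ ≤ ‖a + l • b‖ := by
      calc ‖Y (a + l • b)‖ ≤ ‖Y‖ * ‖a + l • b‖ := Y.le_opNorm _
      _ ≤ 1 * ‖a + l • b‖ := mul_le_mul_of_nonneg_right hY (norm_nonneg _)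
      _ = ‖a + l • b‖ := one_mul _
    have h2 : ‖a + l • b‖^2 = α^2 + l^2*β^2 := by
      rw [norm_add_sq_real, real_inner_smul_right, rz a b hab0, norm_smul]
      first
      | (simp [mul_pow, sq_abs]; ring)
      | simp [mul_pow, sq_abs]
      | ring
    have h3 : ‖Y (a + l • b)‖^2 = ‖ya‖^2 + 2*l*(inner ℝ ya yb : ℝ) + l^2*‖yb‖^2 := by
      have e : Y (a + l • b) = ya + l • yb := by
        rw [map_add, ContinuousLinearMap.map_smul_of_tower]
      rw [e, norm_add_sq_real, real_inner_smul_right, norm_smul]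
      first
      | (simp [mul_pow, sq_abs]; ring)
      | simp [mul_pow, sq_abs]
      | ring
    have h4 : ‖Y (a + l • b)‖^2 ≤ ‖a + l • b‖^2 :=
      pow_le_pow_left₀ (norm_nonneg _) h1 2
    rw [h2, h3] at h4
    linarith
  have hr := lam_cs _ _ _ hA0' hB0' hlam
  set c := Real.sqrt (α^2 - ‖ya‖^2) with hcdef
  set d := Real.sqrt (β^2 - ‖yb‖^2) with hddef
  have hc2 : c^2 = α^2 - ‖ya‖^2 := Real.sq_sqrt hA0'
  have hd2 : d^2 = β^2 - ‖yb‖^2 := Real.sq_sqrt hB0'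
  have hc0 : 0 ≤ c := Real.sqrt_nonneg _
  have hd0 : 0 ≤ d := Real.sqrt_nonneg _
  have hdβ : d ≤ β := by
    rw [hddef]
    calc Real.sqrt (β^2 - ‖yb‖^2) ≤ Real.sqrt (β^2) :=
      Real.sqrt_le_sqrt (by nlinarith [sq_nonneg ‖yb‖])
    _ = β := Real.sqrt_sq (norm_nonneg b)
  have hYv2 : ‖Y v‖^2 ≤ ‖ya‖^2 + 2*(c*d) + ‖yb‖^2 := by
    rw [hYv, norm_add_sq_real]
    linarith [hr]
  have hg30 : (0:ℝ) ≤ 1 - ‖Y v‖^2 := by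
    have h1 : ‖Y v‖ ≤ 1 := by
      calc ‖Y v‖ ≤ ‖Y‖ * ‖v‖ := Y.le_opNorm v
      _ ≤ 1 * 1 := by rw [hv]; exact mul_le_mul_of_nonneg_right hY (by norm_num)
      _ = 1 := one_mul 1
    have h2 : ‖Y v‖^2 ≤ 1 := by
      calc ‖Y v‖^2 ≤ 1^2 := pow_le_pow_left₀ (norm_nonneg (Y v)) h1 2
      _ = 1 := one_pow 2
    linarith
  have hg3 : β ≤ c → (c - β)^2 ≤ 1 - ‖Y v‖^2 := by
    intro hβc
    have h1 : (c-β)^2 ≤ (c-d)^2 := pow_le_pow_left₀ (by linarith) (by linarith) 2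
    have e : (c-d)^2 = c^2 - 2*(c*d) + d^2 := by ring
    linarith [e, hc2, hd2, hαβ, hYv2]
  have hc2low : α^2*(εA*(2-εA)) - k1^2 ≤ c^2 := by
    have hn1sq : ‖n1v‖^2 ≤ ((1-εA)*α)^2 :=
      pow_le_pow_left₀ (norm_nonneg n1v) hn1_le 2
    have e : α^2*(εA*(2-εA)) = α^2 - ((1-εA)*α)^2 := by ring
    linarith [e, hc2, hya_pyth, hn1sq]
  -- D bounds
  set Dv := X v - Y v with hDv
  have hPXv : P (X v) = a := by rw [hXv, map_add, hPXb, add_zero, hPa]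
  have hPYv : P (Y v) = n1v + P yb := by rw [hYv, map_add, hn1v]
  have hg20 : (0:ℝ) ≤ ‖Dv‖^2 := sq_nonneg _
  have hDle := proj_le P hPproj hPsa Dv
  have hybP_le : ‖yb - P yb‖ ≤ β := (proj_le P hPproj hPsa yb).2.trans hyb_le
  have hPyb_le : ‖P yb‖ ≤ β := (proj_le P hPproj hPsa yb).1.trans hyb_le
  have hg2k : (2-εC)*β ≤ k1 → (k1-(2-εC)*β)^2 ≤ ‖Dv‖^2 := by
    intro hcond
    have e1 : Dv = a + X b - (ya + yb) := by rw [hDv, hXv, hYv]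
    have e2 : P Dv = a - (n1v + P yb) := by rw [hDv, map_sub, hPXv, hPYv]
    have hsplit : Dv - P Dv = X b - k1v - (yb - P yb) := by
      rw [e2, e1, hk1v, hn1v]
      abel
    have hsplit2 : k1v = X b - (yb - P yb) - (Dv - P Dv) := by
      rw [hsplit]
      abel
    have htri : k1 ≤ ‖X b‖ + ‖yb - P yb‖ + ‖Dv - P Dv‖ := by
      rw [hk1, hsplit2]
      calc ‖X b - (yb - P yb) - (Dv - P Dv)‖
          ≤ ‖X b - (yb - P yb)‖ + ‖Dv - P Dv‖ := norm_sub_le _ _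
      _ ≤ ‖X b‖ + ‖yb - P yb‖ + ‖Dv - P Dv‖ := by
          linarith [norm_sub_le (X b) (yb - P yb)]
    have h1 : k1 - (2-εC)*β ≤ ‖Dv‖ := by
      have := hDle.2
      linarith [hXb_le, hybP_le]
    exact pow_le_pow_left₀ (by linarith) h1 2
  have hg2s : β ≤ εA*α → (εA*α-β)^2 ≤ ‖Dv‖^2 := by
    intro hcond
    have hsplit : P Dv = (a - n1v) - P yb := by
      rw [hDv, map_sub, hPXv, hPYv]
      abel
    have htri : α - ‖n1v‖ - β ≤ ‖P Dv‖ := by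
      rw [hsplit]
      have h1 : ‖a - n1v‖ - ‖P yb‖ ≤ ‖a - n1v - P yb‖ := norm_sub_norm_le _ _
      have h2 : α - ‖n1v‖ ≤ ‖a - n1v‖ := by
        linarith [norm_sub_norm_le a n1v]
      linarith [hPyb_le]
    have h1 : εA*α - β ≤ ‖Dv‖ := by
      have := hDle.1
      linarith [hn1_le]
    exact pow_le_pow_left₀ (by linarith) h1 2
  -- convexity identity
  have hg1 : εC*(2-εC)*β^2 ≤ 1 - ‖X v‖^2 := by
    have hXb2 : ‖X b‖^2 ≤ ((1-εC)*β)^2 :=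
      pow_le_pow_left₀ (norm_nonneg _) hXb_le 2
    have e : εC*(2-εC)*β^2 = β^2 - ((1-εC)*β)^2 := by ring
    linarith [e, hXv2, hαβ, hXb2]
  have happ : (p • X + (1 - p) • Y) v = p • X v + (1-p) • Y v := by
    simp [ContinuousLinearMap.add_apply]
  have hZ : ‖(p • X + (1 - p) • Y) v‖^2
      = p*‖X v‖^2 + (1-p)*‖Y v‖^2 - p*(1-p)*‖Dv‖^2 := by
    rw [happ]
    have e1 : ‖p • X v + (1-p) • Y v‖^2
        = p^2*‖X v‖^2 + 2*(p*(1-p))*(inner ℝ (X v) (Y v) : ℝ) + (1-p)^2*‖Y v‖^2 := by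
      rw [norm_add_sq_real, real_inner_smul_left, real_inner_smul_right, norm_smul, norm_smul]
      first
      | (simp [mul_pow, sq_abs]; ring)
      | simp [mul_pow, sq_abs]
      | ring
    have e2 : ‖Dv‖^2 = ‖X v‖^2 - 2*(inner ℝ (X v) (Y v) : ℝ) + ‖Y v‖^2 := by
      rw [hDv, norm_sub_sq_real]
      try ring
    rw [e1, e2]
    ring
  have main := scalar_main p εA εC β α c k1 (1 - ‖X v‖^2) (‖Dv‖^2) (1 - ‖Y v‖^2)
    hp0 hp1 hεA0 hεA1 hεC0 hεC1 (norm_nonneg b) (norm_nonneg a) hαβ hc0 (norm_nonneg k1v)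
    hc2low hg1 hg30 hg3 hg20 hg2k hg2s
  linarith [hZ, main]

end vec

theorem stmt2 {H : Type*} [NormedAddCommGroup H] [InnerProductSpace ℂ H]
    [FiniteDimensional ℂ H]
    (P X Y : H →L[ℂ] H)
    (hPproj : P ∘L P = P) (hPsa : IsSelfAdjoint P)
    (hX : ‖X‖ ≤ 1) (hY : ‖Y‖ ≤ 1)
    (hPX : P ∘L X = P) (hXP : X ∘L P = P)
    (εC εA : ℝ) (hεC0 : 0 < εC) (hεC1 : εC < 1) (hεA0 : 0 < εA) (hεA1 : εA < 1)
    (hXgap : ‖(1 - P) ∘L X ∘L (1 - P)‖ ≤ 1 - εC)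
    (hYgap : ‖P ∘L Y ∘L P‖ ≤ 1 - εA)
    (p : ℝ) (hp0 : 0 < p) (hp1 : p < 1) :
    ‖p • X + (1 - p) • Y‖ ≤ 1 - εA / 12 * min (p * εC) (1 - p) ∧
      1 - εA / 12 * min (p * εC) (1 - p) < 1 := by
  have hq0 : (0:ℝ) < 1 - p := by linarith
  have htmin0 : 0 < min (p * εC) (1 - p) := lt_min (mul_pos hp0 hεC0) hq0
  have htmin1 : min (p * εC) (1 - p) ≤ 1 - p := min_le_right _ _
  have hδ1 : εA / 12 * min (p * εC) (1 - p) < 1 := by nlinarith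
  constructor
  · apply ContinuousLinearMap.opNorm_le_bound _ (by linarith)
    intro v
    rcases eq_or_ne v 0 with rfl | hv0
    · simp
    · set u : H := (‖v‖:ℝ)⁻¹ • v with hu
      have hu1 : ‖u‖ = 1 := norm_smul_inv_norm hv0
      have hkey := key_pointwise P X Y hPproj hPsa hX hY hPX hXP εC εA hεC0 hεC1
        hεA0 hεA1 hXgap hYgap p hp0 hp1 u hu1
      have h1 : ‖(p • X + (1 - p) • Y) u‖ ≤ 1 - εA / 12 * min (p * εC) (1 - p) := by
        set t := min (p * εC) (1 - p)
        have e : εA * t / 6 = 2 * (εA / 12 * t) := by ring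
        rw [e] at hkey
        nlinarith [norm_nonneg ((p • X + (1 - p) • Y) u), sq_nonneg (εA / 12 * t)]
      have hvu : v = (‖v‖:ℝ) • u := (smul_inv_smul₀ (norm_ne_zero_iff.2 hv0) v).symm
      calc ‖(p • X + (1 - p) • Y) v‖ = ‖(p • X + (1 - p) • Y) ((‖v‖:ℝ) • u)‖ := by
            rw [← hvu]
      _ = ‖v‖ * ‖(p • X + (1 - p) • Y) u‖ := by
            rw [ContinuousLinearMap.map_smul_of_tower, norm_smul, Real.norm_eq_abs,
              abs_of_nonneg (norm_nonneg v)]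
      _ ≤ ‖v‖ * (1 - εA / 12 * min (p * εC) (1 - p)) :=
            mul_le_mul_of_nonneg_left h1 (norm_nonneg v)
      _ = (1 - εA / 12 * min (p * εC) (1 - p)) * ‖v‖ := by ring
  · have : 0 < εA / 12 * min (p * εC) (1 - p) := by positivity
    linarith
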